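/- For every complete metric space (X,d) there exists C ≥ 0 such that Con(X) is C-roughly geodesic: any two points p, q ∈ X × (0,∞) are joined by a C-rough geodesic ξ : [0, d_Con(p,q)] → Con(X) with ξ(0) = p and ξ(d_Con(p,q)) = q. -/

import Mathlib

/-- The Bonk–Schramm cone distance on `X × (0,∞)`. -/
noncomputable def dCon {X : Type*} [MetricSpace X] (p q : X × ℝ) : ℝ :=
  2 * Real.log ((dist p.1 q.1 + max p.2 q.2) / Real.sqrt (p.2 * q.2))

open Real

lemma mySqrt (h e1 e2 : ℝ) (hh : 0 ≤ h) :
    Real.sqrt ((h * exp e1) * (h * exp e2)) = h * exp ((e1 + e2) / 2) := by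
  have h1 : (h * exp e1) * (h * exp e2) = (h * exp ((e1 + e2) / 2)) ^ 2 := by
    have h2 : exp ((e1 + e2) / 2) ^ 2 = exp (e1 + e2) := by
      rw [sq, ← Real.exp_add]; ring_nf
    rw [mul_pow, h2, Real.exp_add]; ring
  rw [h1, Real.sqrt_sq (by positivity)]

lemma dCon_comm {X : Type*} [MetricSpace X] (p q : X × ℝ) : dCon p q = dCon q p := by
  unfold dCon
  rw [dist_comm, max_comm p.2 q.2, mul_comm p.2 q.2]

lemma dCon_vert {X : Type*} [MetricSpace X] (x : X) (h e1 e2 : ℝ) (hh : 0 < h) :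
    dCon (x, h * exp e1) (x, h * exp e2) = |e1 - e2| := by
  have key : ∀ a b : ℝ, a ≤ b → dCon (x, h * exp a) (x, h * exp b) = b - a := by
    intro a b hab
    unfold dCon
    simp only [dist_self, zero_add]
    rw [mySqrt h a b hh.le,
      max_eq_right (by
        have := Real.exp_le_exp.2 hab
        nlinarith [Real.exp_pos a, Real.exp_pos b]),
      show h * exp b / (h * exp ((a + b) / 2)) = exp b / exp ((a + b) / 2) from by
        rw [mul_div_mul_left _ _ hh.ne'],
      ← Real.exp_sub, Real.log_exp]
    ring
  rcases le_total e1 e2 with hle | hle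
  · rw [key e1 e2 hle, abs_of_nonpos (by linarith)]; ring
  · rw [dCon_comm, key e2 e1 hle, abs_of_nonneg (by linarith)]

lemma dCon_mixed {X : Type*} [MetricSpace X] (x y : X) (h e1 e2 : ℝ) (hh : 0 < h)
    (hd : dist x y ≤ h) (h1 : e1 ≤ 0) (h2 : e2 ≤ 0) :
    dCon (x, h * exp e1) (y, h * exp e2) ≤ (-e1) + (-e2) + 2 * Real.log 2 := by
  unfold dCon
  simp only
  rw [mySqrt h e1 e2 hh.le]
  have hu : h * exp e1 ≤ h := by nlinarith [Real.exp_le_one_iff.2 h1, Real.exp_pos e1]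
  have hv : h * exp e2 ≤ h := by nlinarith [Real.exp_le_one_iff.2 h2, Real.exp_pos e2]
  have hS : 0 < h * exp ((e1 + e2) / 2) := by positivity
  have hN : 0 < dist x y + max (h * exp e1) (h * exp e2) := by
    have : 0 < h * exp e1 := by positivity
    have := le_max_left (h * exp e1) (h * exp e2)
    nlinarith [dist_nonneg (x := x) (y := y)]
  have harg : (dist x y + max (h * exp e1) (h * exp e2)) / (h * exp ((e1 + e2) / 2))
      ≤ 2 * exp (-(e1 + e2) / 2) := by
    rw [div_le_iff₀ hS]
    have hmax : max (h * exp e1) (h * exp e2) ≤ h := max_le hu hv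
    have : 2 * exp (-(e1 + e2) / 2) * (h * exp ((e1 + e2) / 2)) = 2 * h := by
      rw [show 2 * exp (-(e1 + e2) / 2) * (h * exp ((e1 + e2) / 2))
          = 2 * h * (exp (-(e1 + e2) / 2) * exp ((e1 + e2) / 2)) from by ring,
        ← Real.exp_add,
        show -(e1 + e2) / 2 + (e1 + e2) / 2 = 0 from by ring, Real.exp_zero, mul_one]
    rw [this]; linarith
  calc 2 * Real.log ((dist x y + max (h * exp e1) (h * exp e2)) / (h * exp ((e1 + e2) / 2)))
      ≤ 2 * Real.log (2 * exp (-(e1 + e2) / 2)) := by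
        have := Real.log_le_log (by positivity) harg
        linarith
    _ = (-e1) + (-e2) + 2 * Real.log 2 := by
        rw [Real.log_mul two_ne_zero (Real.exp_ne_zero _), Real.log_exp]; ring

lemma dCon_triangle {X : Type*} [MetricSpace X] (p q r : X × ℝ)
    (hp : 0 < p.2) (hq : 0 < q.2) (hr : 0 < r.2) :
    dCon p r ≤ dCon p q + dCon q r := by
  obtain ⟨x, a⟩ := p; obtain ⟨y, b⟩ := q; obtain ⟨z, c⟩ := r
  simp only at hp hq hr
  unfold dCon
  simp only
  have hsab : 0 < Real.sqrt (a * b) := Real.sqrt_pos.2 (by positivity)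
  have hsbc : 0 < Real.sqrt (b * c) := Real.sqrt_pos.2 (by positivity)
  have hsac : 0 < Real.sqrt (a * c) := Real.sqrt_pos.2 (by positivity)
  have hNxz : 0 < dist x z + max a c :=
    lt_of_lt_of_le (lt_of_lt_of_le hp (le_max_left a c)) (le_add_of_nonneg_left dist_nonneg)
  have hNxy : 0 < dist x y + max a b :=
    lt_of_lt_of_le (lt_of_lt_of_le hp (le_max_left a b)) (le_add_of_nonneg_left dist_nonneg)
  have hNyz : 0 < dist y z + max b c :=
    lt_of_lt_of_le (lt_of_lt_of_le hq (le_max_left b c)) (le_add_of_nonneg_left dist_nonneg)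
  rw [← mul_add, ← Real.log_mul (by positivity) (by positivity)]
  have key : (dist x z + max a c) / Real.sqrt (a * c)
      ≤ (dist x y + max a b) / Real.sqrt (a * b) * ((dist y z + max b c) / Real.sqrt (b * c)) := by
    rw [div_mul_div_comm, div_le_div_iff₀ (by positivity) (by positivity)]
    have hsq : Real.sqrt (a * b) * Real.sqrt (b * c) = b * Real.sqrt (a * c) := by
      rw [← Real.sqrt_mul (by positivity), show a * b * (b * c) = b^2 * (a * c) from by ring,
        Real.sqrt_mul (by positivity), Real.sqrt_sq hq.le]
    rw [hsq]
    have hmaxmul : b * max a c ≤ max a b * max b c := by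
      rcases le_total a c with hac | hac
      · rw [max_eq_right hac]
        nlinarith [le_max_right a b, le_max_right b c, le_max_left b c]
      · rw [max_eq_left hac]
        nlinarith [le_max_left a b, le_max_left b c, le_max_right a b]
    have htri := dist_triangle x y z
    have h1 : (dist x z + max a c) * b ≤ (dist x y + max a b) * (dist y z + max b c) := by
      nlinarith [dist_nonneg (x := x) (y := y), dist_nonneg (x := y) (y := z),
        le_max_right a b, le_max_left b c, hmaxmul, htri, hq,
        mul_nonneg (dist_nonneg (x := x) (y := y)) (dist_nonneg (x := y) (y := z)),
        mul_le_mul_of_nonneg_left (le_max_left b c) (dist_nonneg (x := x) (y := y)),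
        mul_le_mul_of_nonneg_right (le_max_right a b) (dist_nonneg (x := y) (y := z))]
    calc (dist x z + max a c) * (b * Real.sqrt (a * c))
        = ((dist x z + max a c) * b) * Real.sqrt (a * c) := by ring
      _ ≤ ((dist x y + max a b) * (dist y z + max b c)) * Real.sqrt (a * c) := by
          exact mul_le_mul_of_nonneg_right h1 hsac.le
      _ = (dist x y + max a b) * (dist y z + max b c) * Real.sqrt (a * c) := by ring
  have := Real.log_le_log (by positivity) key
  linarith

/-- For every complete metric space `(X,d)` there exists `C ≥ 0` such that `Con(X)` is
`C`-roughly geodesic: any two points `p, q ∈ X × (0,∞)` are joined by a `C`-rough geodesic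
`ξ : [0, d_Con(p,q)] → Con(X)` with `ξ(0) = p` and `ξ(d_Con(p,q)) = q`. -/
theorem stmt_4 {X : Type*} [MetricSpace X] [CompleteSpace X] :
    ∃ C : ℝ, 0 ≤ C ∧ ∀ p q : X × ℝ, 0 < p.2 → 0 < q.2 →
      ∃ ξ : ℝ → X × ℝ,
        ξ 0 = p ∧ ξ (dCon p q) = q ∧
        (∀ s ∈ Set.Icc (0 : ℝ) (dCon p q), 0 < (ξ s).2) ∧
        (∀ s ∈ Set.Icc (0 : ℝ) (dCon p q), ∀ s' ∈ Set.Icc (0 : ℝ) (dCon p q),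
          |s - s'| - C ≤ dCon (ξ s) (ξ s') ∧ dCon (ξ s) (ξ s') ≤ |s - s'| + C) := by
  have hlog2 : 0 ≤ Real.log 2 := Real.log_nonneg one_le_two
  refine ⟨4 * Real.log 2, by linarith, ?_⟩
  intro p q hp hq
  set d := dist p.1 q.1 with hd
  set h := d + max p.2 q.2 with hhdef
  have hdn : 0 ≤ d := dist_nonneg
  have hph : p.2 ≤ h := le_add_of_nonneg_left dist_nonneg |>.trans
    (add_le_add_right (le_max_left p.2 q.2) d)
  have hqh : q.2 ≤ h := le_add_of_nonneg_left dist_nonneg |>.trans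
    (add_le_add_right (le_max_right p.2 q.2) d)
  have hh : 0 < h := lt_of_lt_of_le hp hph
  have hdle : d ≤ h := le_add_of_nonneg_right (le_trans hp.le (le_max_left p.2 q.2))
  set a := Real.log h - Real.log p.2 with ha
  set b := Real.log h - Real.log q.2 with hb
  have ha0 : 0 ≤ a := sub_nonneg.2 (Real.log_le_log hp hph)
  have hb0 : 0 ≤ b := sub_nonneg.2 (Real.log_le_log hq hqh)
  have hD : dCon p q = a + b := by
    unfold dCon
    rw [Real.log_div hh.ne' (Real.sqrt_ne_zero'.2 (by positivity)),
      Real.log_sqrt (by positivity), Real.log_mul hp.ne' hq.ne']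
    ring
  set ξ : ℝ → X × ℝ :=
    fun s => if s ≤ a then (p.1, h * Real.exp (s - a)) else (q.1, h * Real.exp (a - s)) with hξ
  have hpos : ∀ s : ℝ, 0 < (ξ s).2 := by
    intro s
    by_cases hs : s ≤ a <;> simp only [hξ, if_pos, if_neg, hs, if_true, if_false] <;> positivity
  have hexp_a : h * Real.exp (-a) = p.2 := by
    rw [ha, neg_sub, Real.exp_sub, Real.exp_log hp, Real.exp_log hh]
    field_simp
  have hexp_b : h * Real.exp (-b) = q.2 := by
    rw [hb, neg_sub, Real.exp_sub, Real.exp_log hq, Real.exp_log hh]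
    field_simp
  have hξ0 : ξ 0 = p := by
    simp only [hξ, if_pos ha0, zero_sub]
    rw [hexp_a]
  have hξD : ξ (dCon p q) = q := by
    rw [hD]
    by_cases hba : a + b ≤ a
    · have hb0' : b = 0 := le_antisymm (by linarith) hb0
      have hhq : h = q.2 := by
        have hlog : Real.log h = Real.log q.2 := by
          have : Real.log h - Real.log q.2 = 0 := hb0' ▸ hb.symm ▸ rfl
          linarith [hb ▸ this]
        calc h = Real.exp (Real.log h) := (Real.exp_log hh).symm
          _ = Real.exp (Real.log q.2) := by rw [hlog]
          _ = q.2 := Real.exp_log hq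
      have hd0 : d = 0 := by
        have h1 : q.2 ≤ max p.2 q.2 := le_max_right p.2 q.2
        have : d + max p.2 q.2 = q.2 := by rw [← hhdef, hhq]
        nlinarith [le_max_right p.2 q.2]
      have hxy : p.1 = q.1 := by rwa [hd, dist_eq_zero] at hd0
      simp only [hξ, if_pos hba]
      have h2 : h * Real.exp (a + b - a) = q.2 := by
        rw [show a + b - a = b from by ring, hb0', Real.exp_zero, mul_one, hhq]
      rw [hxy, h2]
    · simp only [hξ, if_neg hba]
      rw [show a - (a + b) = -b from by ring, hexp_b]
  have hupper : ∀ s s' : ℝ, dCon (ξ s) (ξ s') ≤ |s - s'| + 2 * Real.log 2 := by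
    have hmix : ∀ s s' : ℝ, s ≤ a → ¬ s' ≤ a →
        dCon (ξ s) (ξ s') ≤ |s - s'| + 2 * Real.log 2 := by
      intro s s' hs hs'
      simp only [hξ, if_pos hs, if_neg hs']
      have hkey := dCon_mixed p.1 q.1 h (s - a) (a - s') hh hdle (by linarith) (by linarith)
      have habs : |s - s'| = s' - s := by rw [abs_of_nonpos (by linarith)]; ring
      rw [habs]; linarith
    intro s s'
    by_cases hs : s ≤ a <;> by_cases hs' : s' ≤ a
    · simp only [hξ, if_pos hs, if_pos hs']
      rw [dCon_vert p.1 h _ _ hh, show s - a - (s' - a) = s - s' from by ring]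
      linarith
    · exact hmix s s' hs hs'
    · rw [dCon_comm, abs_sub_comm]
      exact hmix s' s hs' hs
    · simp only [hξ, if_neg hs, if_neg hs']
      rw [dCon_vert q.1 h _ _ hh, show a - s - (a - s') = s' - s from by ring, abs_sub_comm]
      linarith
  have hlow : ∀ s s' : ℝ, 0 ≤ s → s ≤ s' → s' ≤ dCon p q →
      s' - s - 4 * Real.log 2 ≤ dCon (ξ s) (ξ s') := by
    intro s s' h0 hss hsD
    have t1 : dCon p q ≤ dCon p (ξ s) + dCon (ξ s) q :=
      dCon_triangle p (ξ s) q hp (hpos s) hq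
    have t2 : dCon (ξ s) q ≤ dCon (ξ s) (ξ s') + dCon (ξ s') q :=
      dCon_triangle (ξ s) (ξ s') q (hpos s) (hpos s') hq
    have u1 : dCon p (ξ s) ≤ s + 2 * Real.log 2 := by
      have := hupper 0 s
      rw [hξ0] at this
      rw [show |0 - s| = s from by rw [abs_of_nonpos (by linarith)]; ring] at this
      exact this
    have u2 : dCon (ξ s') q ≤ (dCon p q - s') + 2 * Real.log 2 := by
      have := hupper s' (dCon p q)
      rw [hξD] at this
      rw [show |s' - dCon p q| = dCon p q - s' from by
        rw [abs_of_nonpos (by linarith)]; ring] at this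
      exact this
    linarith
  refine ⟨ξ, hξ0, hξD, fun s _ => hpos s, ?_⟩
  intro s hs s' hs'
  constructor
  · rcases le_total s s' with hss | hss
    · have := hlow s s' hs.1 hss hs'.2
      rw [abs_of_nonpos (by linarith)]
      linarith
    · have := hlow s' s hs'.1 hss hs.2
      rw [dCon_comm, abs_of_nonneg (by linarith)]
      linarith
  · have := hupper s s'
    linarith
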